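/- In ℂ[x,y], set p = x − x² − x²y − 1 and q = x − (1 + x + xy)². Then: (a) the quotient algebras ℂ[x,y]/⟨p⟩ and ℂ[x,y]/⟨q⟩ are isomorphic as ℂ-algebras; (b) there is no point of ℂ² at which both partial derivatives of p vanish; (c) both partial derivatives of q vanish at the point (0, −1/2); and consequently (d) there is no ℂ-algebra automorphism σ of ℂ[x,y] such that σ(⟨p⟩) = ⟨q⟩. -/

import Mathlib

open MvPolynomial

set_option maxHeartbeats 2000000
set_option maxRecDepth 8000

namespace Ex33

noncomputable section

abbrev R2 : Type := MvPolynomial (Fin 2) ℂ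

def pP : R2 := X 0 - X 0 ^ 2 - X 0 ^ 2 * X 1 - 1
def qP : R2 := X 0 - (1 + X 0 + X 0 * X 1) ^ 2
def uu : R2 := 1 + X 0 + X 0 * X 1
def ww : R2 := (uu - X 0 - 1) * (-(1 + X 1) * uu - X 1)
def gg : R2 := (X 0 - 1 - X 0 ^ 2) * (1 - X 0 - X 0 * X 1) ^ 2
def FF : R2 →ₐ[ℂ] R2 := aeval ![uu, ww]
def GG : R2 →ₐ[ℂ] R2 := aeval ![X 0 ^ 2, gg]

def cA : R2 := (1) + (-2)*X 0*X 1 + (-2)*X 0*X 1^2 + (-1)*X 0^2*X 1 + (-2)*X 0^2*X 1^2 + (-1)*X 0^2*X 1^3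
def cB : R2 := (1) + (1)*X 0 + (-1)*X 0^2 + (-1)*X 0^2*X 1 + (4)*X 0^3 + (2)*X 0^3*X 1 + (-3)*X 0^4 + (-4)*X 0^4*X 1 + (-1)*X 0^4*X 1^2 + (-1)*X 0^5 + (-2)*X 0^5*X 1 + (-1)*X 0^5*X 1^2 + (9)*X 0^6 + (13)*X 0^6*X 1 + (6)*X 0^6*X 1^2 + (1)*X 0^6*X 1^3 + (-14)*X 0^7 + (-24)*X 0^7*X 1 + (-13)*X 0^7*X 1^2 + (-2)*X 0^7*X 1^3 + (11)*X 0^8 + (22)*X 0^8*X 1 + (14)*X 0^8*X 1^2 + (3)*X 0^8*X 1^3 + (-5)*X 0^9 + (-12)*X 0^9*X 1 + (-9)*X 0^9*X 1^2 + (-2)*X 0^9*X 1^3 + (1)*X 0^10 + (3)*X 0^10*X 1 + (3)*X 0^10*X 1^2 + (1)*X 0^10*X 1^3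
def cI1 : R2 := (-1) + (1)*X 0^2 + (1)*X 0^2*X 1 + (-2)*X 0^3 + (-1)*X 0^3*X 1 + (1)*X 0^4 + (1)*X 0^4*X 1
def cI2 : R2 := (1) + (1)*X 1 + (-2)*X 0 + (-1)*X 0*X 1 + (1)*X 0^2 + (1)*X 0^2*X 1
def cJ : R2 := (1)*X 1 + (-1)*X 0*X 1 + (-2)*X 0*X 1^2 + (1)*X 0^2 + (-2)*X 0^2*X 1^2 + (3)*X 0^2*X 1^3 + (4)*X 0^2*X 1^4 + (-4)*X 0^3*X 1 + (-8)*X 0^3*X 1^2 + (4)*X 0^3*X 1^3 + (16)*X 0^3*X 1^4 + (8)*X 0^3*X 1^5 + (-2)*X 0^4*X 1 + (-2)*X 0^4*X 1^2 + (15)*X 0^4*X 1^3 + (37)*X 0^4*X 1^4 + (31)*X 0^4*X 1^5 + (9)*X 0^4*X 1^6 + (4)*X 0^5*X 1^2 + (21)*X 0^5*X 1^3 + (44)*X 0^5*X 1^4 + (46)*X 0^5*X 1^5 + (24)*X 0^5*X 1^6 + (5)*X 0^5*X 1^7 + (1)*X 0^6*X 1^2 + (6)*X 0^6*X 1^3 +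 (15)*X 0^6*X 1^4 + (20)*X 0^6*X 1^5 + (15)*X 0^6*X 1^6 + (6)*X 0^6*X 1^7 + (1)*X 0^6*X 1^8

lemma FFX0 : FF (X 0) = uu := by simp [FF]
lemma FFX1 : FF (X 1) = ww := by simp [FF]
lemma GGX0 : GG (X 0) = X 0 ^ 2 := by simp [GG]
lemma GGX1 : GG (X 1) = gg := by simp [GG]
lemma hFp : FF pP = qP * cA := by
  simp only [pP, map_sub, map_mul, map_pow, map_one, FFX0, FFX1]
  simp only [uu, ww, qP, cA]
  ring
lemma hGq : GG qP = pP * cB := by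
  simp only [qP, map_sub, map_add, map_mul, map_pow, map_one, GGX0, GGX1]
  simp only [gg, pP, cB]
  ring
def Ip : Ideal R2 := Ideal.span {pP}
def Iq : Ideal R2 := Ideal.span {qP}

def φ : (R2 ⧸ Ip) →ₐ[ℂ] (R2 ⧸ Iq) :=
  Ideal.Quotient.liftₐ Ip ((Ideal.Quotient.mkₐ ℂ Iq).comp FF) (by
    intro a ha
    obtain ⟨c, rfl⟩ := Ideal.mem_span_singleton.mp ha
    simp only [AlgHom.comp_apply, map_mul, hFp, Ideal.Quotient.mkₐ_eq_mk]
    exact Ideal.Quotient.eq_zero_iff_mem.mpr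
      (Ideal.mem_span_singleton.mpr ⟨cA * FF c, by ring⟩))

def ψ : (R2 ⧸ Iq) →ₐ[ℂ] (R2 ⧸ Ip) :=
  Ideal.Quotient.liftₐ Iq ((Ideal.Quotient.mkₐ ℂ Ip).comp GG) (by
    intro a ha
    obtain ⟨c, rfl⟩ := Ideal.mem_span_singleton.mp ha
    simp only [AlgHom.comp_apply, map_mul, hGq, Ideal.Quotient.mkₐ_eq_mk]
    exact Ideal.Quotient.eq_zero_iff_mem.mpr
      (Ideal.mem_span_singleton.mpr ⟨cB * GG c, by ring⟩))

lemma φ_mk (f : R2) : φ (Ideal.Quotient.mk Ip f) = Ideal.Quotient.mk Iq (FF f) := by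
  unfold φ
  rw [Ideal.Quotient.liftₐ_apply]
  rfl
lemma ψ_mk (f : R2) : ψ (Ideal.Quotient.mk Iq f) = Ideal.Quotient.mk Ip (GG f) := by
  unfold ψ
  rw [Ideal.Quotient.liftₐ_apply]
  rfl
lemma e_GGuu : Ideal.Quotient.mk Ip (GG uu) = Ideal.Quotient.mk Ip (X 0) := by
  refine Ideal.Quotient.eq.mpr (Ideal.mem_span_singleton.mpr ⟨cI1, ?_⟩)
  simp only [uu, map_add, map_mul, map_one, GGX0, GGX1]
  simp only [gg, pP, cI1]
  ring

lemma e_gg : Ideal.Quotient.mk Ip gg = Ideal.Quotient.mk Ip (X 1) := by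
  refine Ideal.Quotient.eq.mpr (Ideal.mem_span_singleton.mpr ⟨cI2, ?_⟩)
  simp only [gg, pP, cI2]
  ring

lemma hP : (Ideal.Quotient.mk Ip (X 0)) - (Ideal.Quotient.mk Ip (X 0))^2
    - (Ideal.Quotient.mk Ip (X 0))^2 * (Ideal.Quotient.mk Ip (X 1)) - 1 = 0 := by
  have h : Ideal.Quotient.mk Ip pP = 0 :=
    Ideal.Quotient.eq_zero_iff_mem.mpr (Ideal.mem_span_singleton_self pP)
  simpa only [pP, map_sub, map_pow, map_mul, map_one] using h

lemma comp_psi_phi : ψ.comp φ = AlgHom.id ℂ (R2 ⧸ Ip) := by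
  apply Ideal.Quotient.algHom_ext
  apply MvPolynomial.algHom_ext
  intro i
  fin_cases i
  · show ψ (φ (Ideal.Quotient.mkₐ ℂ Ip (X 0))) = Ideal.Quotient.mkₐ ℂ Ip (X 0)
    rw [Ideal.Quotient.mkₐ_eq_mk, φ_mk, FFX0, ψ_mk]
    exact e_GGuu
  · show ψ (φ (Ideal.Quotient.mkₐ ℂ Ip (X 1))) = Ideal.Quotient.mkₐ ℂ Ip (X 1)
    rw [Ideal.Quotient.mkₐ_eq_mk, φ_mk, FFX1, ψ_mk]
    have hGGww : GG ww = (GG uu - X 0 ^ 2 - 1) * (-(1 + gg) * GG uu - gg) := by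
      simp only [ww, map_mul, map_sub, map_neg, map_add, map_one, GGX0, GGX1]
    rw [hGGww]
    simp only [map_mul, map_sub, map_neg, map_add, map_one, map_pow]
    rw [e_GGuu, e_gg]
    linear_combination (-(Ideal.Quotient.mk Ip (X 0))) * hP

lemma comp_phi_psi : φ.comp ψ = AlgHom.id ℂ (R2 ⧸ Iq) := by
  apply Ideal.Quotient.algHom_ext
  apply MvPolynomial.algHom_ext
  intro i
  fin_cases i
  · show φ (ψ (Ideal.Quotient.mkₐ ℂ Iq (X 0))) = Ideal.Quotient.mkₐ ℂ Iq (X 0)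
    rw [Ideal.Quotient.mkₐ_eq_mk, ψ_mk, GGX0, φ_mk]
    refine Ideal.Quotient.eq.mpr (Ideal.mem_span_singleton.mpr ⟨-1, ?_⟩)
    simp only [map_pow, FFX0]
    simp only [uu, qP]
    ring
  · show φ (ψ (Ideal.Quotient.mkₐ ℂ Iq (X 1))) = Ideal.Quotient.mkₐ ℂ Iq (X 1)
    rw [Ideal.Quotient.mkₐ_eq_mk, ψ_mk, GGX1, φ_mk]
    refine Ideal.Quotient.eq.mpr (Ideal.mem_span_singleton.mpr ⟨cJ, ?_⟩)
    have hFFgg : FF gg = (uu - 1 - uu ^ 2) * (1 - uu - uu * ww) ^ 2 := by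
      simp only [gg, map_mul, map_sub, map_pow, map_one, FFX0, FFX1]
    rw [hFFgg]
    simp only [uu, ww, qP, cJ]
    ring

def theEquiv : (R2 ⧸ Ip) ≃ₐ[ℂ] (R2 ⧸ Iq) :=
  AlgEquiv.ofAlgHom φ ψ comp_phi_psi comp_psi_phi

/-- Chain rule for `pderiv` and `aeval`. -/
lemma pderiv_aeval_eq (g : Fin 2 → R2) (j : Fin 2) (f : R2) :
    pderiv j (aeval g f) = ∑ i, aeval g (pderiv i f) * pderiv j (g i) := by
  induction f using MvPolynomial.induction_on with
  | C a => simp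
  | add f₁ f₂ h₁ h₂ =>
      simp only [map_add, h₁, h₂, add_mul, Finset.sum_add_distrib]
  | mul_X f i h =>
      simp only [map_mul, aeval_X, pderiv_mul, h, Fin.sum_univ_two, map_add, add_mul]
      fin_cases i <;>
        simp [pderiv_X, Pi.single_apply, mul_add, add_mul] <;> ring

/-- A unit of `ℂ[x,y]` is a constant. -/
lemma eq_C_of_isUnit {v : R2} (h : IsUnit v) : ∃ c : ℂ, v = C c := by
  have h1 : IsUnit (finSuccEquiv ℂ 1 v) := h.map _
  obtain ⟨r, hr, hrv⟩ := Polynomial.isUnit_iff.mp h1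
  have h2 : IsUnit (finSuccEquiv ℂ 0 r) := hr.map _
  obtain ⟨s, hs, hsr⟩ := Polynomial.isUnit_iff.mp h2
  obtain ⟨c, rfl⟩ := C_surjective (Fin 0) s
  have hrc : r = MvPolynomial.C c := by
    have h3 := congrArg (finSuccEquiv ℂ 0).symm hsr
    rw [AlgEquiv.symm_apply_apply] at h3
    rw [← h3]
    exact (RingHom.congr_fun (finSuccEquiv_comp_C_eq_C 0) c)
  subst hrc
  have h4 := congrArg (finSuccEquiv ℂ 1).symm hrv
  rw [AlgEquiv.symm_apply_apply] at h4
  exact ⟨c, by rw [← h4]; exact (RingHom.congr_fun (finSuccEquiv_comp_C_eq_C 1) c).symm ▸ rfl⟩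

end

end Ex33

open Ex33 in
/-- Example 3.3 of the paper: with `x = X 0`, `y = X 1` in `ℂ[x,y]`,
`p = x - x² - x²y - 1` and `q = x - (1 + x + xy)²`: (a) the quotient algebras are
isomorphic; (b) `grad p` vanishes nowhere; (c) `grad q` vanishes at `(0, -1/2)`;
and (d) no `ℂ`-algebra automorphism of `ℂ[x,y]` maps `⟨p⟩` onto `⟨q⟩`. -/
theorem example_3_3
    (p q : MvPolynomial (Fin 2) ℂ)
    (hp : p = X 0 - X 0 ^ 2 - X 0 ^ 2 * X 1 - 1)
    (hq : q = X 0 - (1 + X 0 + X 0 * X 1) ^ 2) :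
    Nonempty ((MvPolynomial (Fin 2) ℂ ⧸ Ideal.span {p}) ≃ₐ[ℂ]
      (MvPolynomial (Fin 2) ℂ ⧸ Ideal.span {q})) ∧
    (¬ ∃ a : Fin 2 → ℂ, ∀ i, eval a (pderiv i p) = 0) ∧
    (∀ i, eval ![(0 : ℂ), -(1/2 : ℂ)] (pderiv i q) = 0) ∧
    ¬ ∃ σ : MvPolynomial (Fin 2) ℂ ≃ₐ[ℂ] MvPolynomial (Fin 2) ℂ,
      Ideal.map σ (Ideal.span {p}) = Ideal.span {q} := by
  subst hp hq
  have hb : ¬ ∃ a : Fin 2 → ℂ, ∀ i, eval a (pderiv i pP) = 0 := by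
    rintro ⟨a, h⟩
    have hd1 : pderiv 1 pP = -(X 0 ^ 2) := by
      simp only [pP, map_sub, pderiv_mul, pderiv_pow, pderiv_X_self, pderiv_one,
        pderiv_X_of_ne (show (0 : Fin 2) ≠ 1 by decide)]
      ring
    have hd0 : pderiv 0 pP = 1 - 2 * X 0 - 2 * X 0 * X 1 := by
      simp only [pP, map_sub, pderiv_mul, pderiv_pow, pderiv_X_self, pderiv_one,
        pderiv_X_of_ne (show (1 : Fin 2) ≠ 0 by decide)]
      ring
    have h1 := h 1
    have h0 := h 0
    rw [hd1] at h1
    rw [hd0] at h0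
    simp only [eval_sub, eval_mul, eval_add, eval_pow, eval_neg, map_one, eval_X,
      eval_ofNat, map_ofNat] at h0 h1
    have ha0 : a 0 = 0 := by
      have h2 : (a 0) ^ 2 = 0 := by linear_combination -h1
      exact pow_eq_zero_iff (by norm_num) |>.mp h2
    rw [ha0] at h0
    simp at h0
  have hc : ∀ i, eval ![(0 : ℂ), -(1/2 : ℂ)] (pderiv i qP) = 0 := by
    have hd0 : pderiv 0 qP = 1 - 2 * (1 + X 0 + X 0 * X 1) * (1 + X 1) := by
      simp only [qP, map_sub, map_add, pderiv_mul, pderiv_pow, pderiv_X_self, pderiv_one,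
        pderiv_X_of_ne (show (1 : Fin 2) ≠ 0 by decide)]
      ring
    have hd1 : pderiv 1 qP = -(2 * (1 + X 0 + X 0 * X 1) * X 0) := by
      simp only [qP, map_sub, map_add, pderiv_mul, pderiv_pow, pderiv_X_self, pderiv_one,
        pderiv_X_of_ne (show (0 : Fin 2) ≠ 1 by decide)]
      ring
    intro i
    fin_cases i
    · show eval ![(0:ℂ), -(1/2:ℂ)] (pderiv 0 qP) = 0
      rw [hd0]
      simp only [eval_sub, eval_mul, eval_add, map_one, eval_X, eval_ofNat,
        Matrix.cons_val_zero, Matrix.cons_val_one, Matrix.head_cons]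
      norm_num
    · show eval ![(0:ℂ), -(1/2:ℂ)] (pderiv 1 qP) = 0
      rw [hd1]
      simp only [eval_neg, eval_sub, eval_mul, eval_add, map_one, eval_X, eval_ofNat,
        Matrix.cons_val_zero, Matrix.cons_val_one, Matrix.head_cons]
      norm_num
  refine ⟨⟨theEquiv⟩, hb, hc, ?_⟩
  rintro ⟨σ, hσ⟩
  have hσ' : Ideal.map σ (Ideal.span {pP}) = Ideal.span {qP} := hσ
  have hmap : Ideal.span {σ pP} = Ideal.span {qP} := by
    rw [← hσ', Ideal.map_span, Set.image_singleton]
  obtain ⟨v, hv⟩ := Ideal.span_singleton_eq_span_singleton.mp hmap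
  have hσp : σ pP = qP * (↑v⁻¹ : R2) := by
    rw [← hv, mul_assoc, Units.mul_inv, mul_one]
  obtain ⟨c, hcc⟩ := eq_C_of_isUnit (v⁻¹).isUnit
  rw [hcc] at hσp
  set a : Fin 2 → ℂ := ![(0 : ℂ), -(1/2 : ℂ)] with ha
  have hσC : ∀ r : ℂ, σ (C r) = C r := by
    intro r
    rw [← MvPolynomial.algebraMap_eq]
    exact σ.commutes r
  have hevb : ∀ f : R2, eval (fun i => eval a (σ (X i))) f = eval a (σ f) := by
    intro f
    have hhom : (eval (fun i => eval a (σ (X i))) : R2 →+* ℂ)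
        = (eval a : R2 →+* ℂ).comp σ.toAlgHom.toRingHom := by
      apply MvPolynomial.ringHom_ext
      · intro r; simp [hσC r]
      · intro i; simp
    exact RingHom.congr_fun hhom f
  set b : Fin 2 → ℂ := fun i => eval a (σ (X i)) with hbdef
  have hτ : (aeval (fun i => σ.symm (X i)) : R2 →ₐ[ℂ] R2) = (σ.symm : R2 ≃ₐ[ℂ] R2) := by
    apply MvPolynomial.algHom_ext
    intro i
    simp
  have hτ' : ∀ f : R2, aeval (fun i => σ.symm (X i)) f = σ.symm f := by
    intro f; exact DFunLike.congr_fun hτ f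
  have hkey : ∀ j : Fin 2, eval a (pderiv j (σ pP)) = 0 := by
    intro j
    rw [hσp, pderiv_mul, pderiv_C]
    simp only [mul_zero, add_zero, eval_mul]
    rw [hc j]
    ring
  have hbz : ∀ j, eval b (pderiv j pP) = 0 := by
    intro j
    have h1 : pP = aeval (fun i => σ.symm (X i)) (σ pP) := by
      rw [hτ', AlgEquiv.symm_apply_apply]
    rw [h1, pderiv_aeval_eq]
    rw [map_sum]
    refine Finset.sum_eq_zero fun i _ => ?_
    rw [eval_mul, hτ', hevb, AlgEquiv.apply_symm_apply, hkey i, zero_mul]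
  exact hb ⟨b, hbz⟩
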